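/- arXiv:1703.05858 — 2 statements merged into one kernel-verified Lean document; each statement's English description precedes it below -/
import Mathlib

section
/- Let n ≥ 3, m ≥ 1, and let Γ be the connected component of (0,…,0) in the tensor product of m cycles each of length 2n. Then the stabilizer in Aut(Γ) of the vertex v = (0,…,0) has order at most 2^m · m!, and hence Aut(Γ) is generated by the automorphisms of the cycle factors together with permutations of the factors. -/
def cycleTensor (n m : ℕ) : SimpleGraph (Fin m → ZMod (2 * n)) where
  Adj x y := x ≠ y ∧ ∀ i, x i - y i = 1 ∨ x i - y i = -1
  symm := ⟨by
    rintro x y ⟨hne, hs⟩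
    refine ⟨hne.symm, fun i => ?_⟩
    rcases hs i with h | h
    · right
      have : y i - x i = -(x i - y i) := by ring
      rw [this, h]
    · left
      have : y i - x i = -(x i - y i) := by ring
      rw [this, h]; ring⟩
  loopless := ⟨fun x h => h.1 rfl⟩

noncomputable def cycleTensorComp (n m : ℕ) :
    SimpleGraph (((cycleTensor n m).connectedComponentMk 0).supp) :=
  SimpleGraph.induce (((cycleTensor n m).connectedComponentMk 0).supp) (cycleTensor n m)


namespace CTC
variable {n m : ℕ}

lemma cast_ne_zero (hn : 3 ≤ n) {k : ℕ} (h0 : k ≠ 0) (hk : k < 2*n) :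
    (k : ZMod (2*n)) ≠ 0 := by
  haveI : NeZero (2*n) := ⟨by omega⟩
  intro h
  have hv := ZMod.val_cast_of_lt (n := 2*n) hk
  rw [h, ZMod.val_zero] at hv
  omega

lemma two_nz (hn : 3 ≤ n) : (2 : ZMod (2*n)) ≠ 0 := by
  have := cast_ne_zero (n := n) hn (k := 2) (by norm_num) (by omega)
  simpa using this

lemma four_nz (hn : 3 ≤ n) : (4 : ZMod (2*n)) ≠ 0 := by
  have := cast_ne_zero (n := n) hn (k := 4) (by norm_num) (by omega)
  simpa using this

lemma one_nz (hn : 3 ≤ n) : (1 : ZMod (2*n)) ≠ 0 := by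
  have := cast_ne_zero (n := n) hn (k := 1) (by norm_num) (by omega)
  simpa using this

lemma one_ne_neg_one (hn : 3 ≤ n) : (1 : ZMod (2*n)) ≠ -1 := fun h =>
  two_nz hn (by linear_combination h)

/-- values that are `±1` -/
lemma pm1_ne_zero (hn : 3 ≤ n) {a : ZMod (2*n)} (h : a = 1 ∨ a = -1) : a ≠ 0 := by
  rcases h with h | h <;> subst h
  · exact one_nz hn
  · intro h; exact one_nz hn (by linear_combination -h)

lemma pm1_cancel (hn : 3 ≤ n) {a b c : ZMod (2*n)}
    (ha : a = 1 ∨ a = -1) (hb : b = 1 ∨ b = -1) (hc : c = 1 ∨ c = -1)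
    (h1 : a + (b - c) = 1 ∨ a + (b - c) = -1)
    (h2 : a - (b - c) = 1 ∨ a - (b - c) = -1) : b = c := by
  have t2 := two_nz hn
  have t4 := four_nz hn
  rcases hb with hb | hb <;> rcases hc with hc | hc <;> subst hb <;> subst hc <;> try rfl
  · -- b = 1, c = -1 : b - c = 2
    exfalso
    rcases ha with ha | ha <;> subst ha
    · rcases h1 with h | h
      · exact t2 (by linear_combination h)
      · exact t4 (by linear_combination h)
    · rcases h2 with h | h
      · exact t4 (by linear_combination -h)
      · exact t2 (by linear_combination -h)
  · -- b = -1, c = 1 : b - c = -2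
    exfalso
    rcases ha with ha | ha <;> subst ha
    · rcases h2 with h | h
      · exact t2 (by linear_combination h)
      · exact t4 (by linear_combination h)
    · rcases h1 with h | h
      · exact t4 (by linear_combination -h)
      · exact t2 (by linear_combination -h)

lemma pm1_sub (hn : 3 ≤ n) {a b : ZMod (2*n)} (ha : a = 1 ∨ a = -1) (hb : b = 1 ∨ b = -1) :
    a = b ∨ a - b = 2 ∨ a - b = -2 := by
  rcases ha with ha | ha <;> rcases hb with hb | hb <;> subst ha <;> subst hb
  · exact Or.inl rfl
  · exact Or.inr (Or.inl (by ring))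
  · exact Or.inr (Or.inr (by ring))
  · exact Or.inl rfl


variable {n m : ℕ}


/-- the ±1 predicate on difference vectors -/
def IsPm (n m : ℕ) (d : Fin m → ZMod (2*n)) : Prop := ∀ i, d i = 1 ∨ d i = -1

lemma isPm_neg {d : Fin m → ZMod (2*n)} (h : IsPm n m d) : IsPm n m (-d) := by
  intro i
  rcases h i with h' | h'
  · right; simp [h']
  · left; simp [h']

lemma adj_iff (hn : 3 ≤ n) (hm : 1 ≤ m) {x y : Fin m → ZMod (2*n)} :
    (cycleTensor n m).Adj x y ↔ IsPm n m (x - y) := by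
  constructor
  · intro h i; exact (show x ≠ y ∧ ∀ i, x i - y i = 1 ∨ x i - y i = -1 from h).2 i
  · intro h
    show x ≠ y ∧ ∀ i, x i - y i = 1 ∨ x i - y i = -1
    refine ⟨fun he => ?_, fun i => h i⟩
    have := h ⟨0, hm⟩
    rw [he] at this
    simp only [Pi.sub_apply, sub_self] at this
    rcases this with h' | h'
    · exact one_nz hn h'.symm
    · exact pm1_ne_zero hn (Or.inr rfl) h'.symm

abbrev suppSet (n m : ℕ) : Set (Fin m → ZMod (2*n)) :=
  ((cycleTensor n m).connectedComponentMk 0).supp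

lemma mem_supp_of_adj {x y : Fin m → ZMod (2*n)} (hx : x ∈ suppSet n m)
    (h : (cycleTensor n m).Adj x y) : y ∈ suppSet n m := by
  rw [SimpleGraph.ConnectedComponent.mem_supp_iff] at *
  rw [← hx]
  exact SimpleGraph.ConnectedComponent.sound h.symm.reachable

lemma comp_adj {a b : suppSet n m} :
    (cycleTensorComp n m).Adj a b ↔ (cycleTensor n m).Adj a.1 b.1 := Iff.rfl

lemma zero_mem_supp : (0 : Fin m → ZMod (2*n)) ∈ suppSet n m :=
  (SimpleGraph.ConnectedComponent.mem_supp_iff _ _).mpr rfl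

lemma mem_supp_of_isPm_sub (hn : 3 ≤ n) (hm : 1 ≤ m) {x y : Fin m → ZMod (2*n)}
    (hx : x ∈ suppSet n m) (h : IsPm n m (x - y)) : y ∈ suppSet n m :=
  mem_supp_of_adj hx ((adj_iff hn hm).mpr h)



def hd (x y : Fin m → Bool) : ℕ := (Finset.univ.filter fun i => x i ≠ y i).card

def ebool (j : Fin m) : Fin m → Bool := fun i => decide (i = j)

def zbool : Fin m → Bool := fun _ => false

lemma hd_eq_zero_iff {x y : Fin m → Bool} : hd x y = 0 ↔ x = y := by
  unfold hd
  rw [Finset.card_eq_zero, Finset.filter_eq_empty_iff]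
  constructor
  · intro h; funext i; have := h (Finset.mem_univ i); simpa using this
  · intro h i _; simp [h]

lemma hd_xor (x y c : Fin m → Bool) :
    hd (fun i => xor (x i) (c i)) (fun i => xor (y i) (c i)) = hd x y := by
  unfold hd
  congr 1
  ext i
  simp only [Finset.mem_filter, Finset.mem_univ, true_and]
  cases x i <;> cases y i <;> cases c i <;> simp

lemma wt_ebool (j : Fin m) : hd (ebool j) zbool = 1 := by
  unfold hd
  have : (Finset.univ.filter fun i => ebool j i ≠ zbool i) = {j} := by
    ext i
    simp [ebool, zbool]
  rw [this, Finset.card_singleton]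

lemma eq_ebool_of_wt_one {x : Fin m → Bool} (h : hd x zbool = 1) : ∃ j, x = ebool j := by
  unfold hd at h
  obtain ⟨j, hj⟩ := Finset.card_eq_one.mp h
  refine ⟨j, funext fun i => ?_⟩
  by_cases hij : i = j
  · subst hij
    have : i ∈ Finset.univ.filter fun i => x i ≠ zbool i := by rw [hj]; simp
    simp only [Finset.mem_filter] at this
    simp only [zbool] at this
    simp [ebool, Bool.ne_false_iff.mp this.2]
  · have : i ∉ Finset.univ.filter fun i => x i ≠ zbool i := by rw [hj]; simp [hij]
    simp only [Finset.mem_filter] at this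
    simp only [Finset.mem_univ, true_and, not_not, zbool] at this
    simp [ebool, hij, this]

lemma hd_single (a : Fin m → Bool) (t : Fin m) :
    hd a (ebool t) = if a t = true then hd a zbool - 1 else hd a zbool + 1 := by
  unfold hd
  by_cases hat : a t = true
  · simp only [hat, if_true]
    have : (Finset.univ.filter fun i => a i ≠ ebool t i)
        = (Finset.univ.filter fun i => a i ≠ zbool i).erase t := by
      ext i
      simp only [Finset.mem_filter, Finset.mem_erase]
      by_cases hit : i = t
      · subst hit; simp [ebool, hat]
      · simp [ebool, zbool, hit]
    rw [this, Finset.card_erase_of_mem]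
    simp [hat, zbool]
  · rw [if_neg hat]
    have hat' : a t = false := by revert hat; cases a t <;> simp
    have : (Finset.univ.filter fun i => a i ≠ ebool t i)
        = insert t (Finset.univ.filter fun i => a i ≠ zbool i) := by
      ext i
      simp only [Finset.mem_filter, Finset.mem_insert]
      by_cases hit : i = t
      · subst hit; simp [ebool, hat']
      · simp [ebool, zbool, hit]
    rw [this, Finset.card_insert_of_notMem (by simp [hat', zbool])]

lemma hd_eq_one {a b : Fin m → Bool} (h : hd a b = 1) :
    ∃ l, (∀ i, a i ≠ b i ↔ i = l) := by
  unfold hd at h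
  obtain ⟨l, hl⟩ := Finset.card_eq_one.mp h
  refine ⟨l, fun i => ?_⟩
  have hmem : (a i ≠ b i) ↔ i ∈ Finset.univ.filter fun j => a j ≠ b j := by simp
  rw [hmem, hl, Finset.mem_singleton]

theorem hypercube_classify (g : (Fin m → Bool) → (Fin m → Bool))
    (hg : ∀ x y, hd (g x) (g y) = hd x y) :
    ∃ (σ : Equiv.Perm (Fin m)) (s : Fin m → Bool),
      ∀ x i, g x i = xor (s i) (x (σ i)) := by
  classical
  set h : (Fin m → Bool) → (Fin m → Bool) := fun x => fun i => xor (g x i) (g zbool i)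
    with hhdef
  have hh : ∀ x y, hd (h x) (h y) = hd x y :=
    fun x y => (hd_xor (g x) (g y) (g zbool)).trans (hg x y)
  have hhz : h zbool = zbool := by
    funext i
    show xor (g zbool i) (g zbool i) = zbool i
    simp [zbool]
  have hinj : Function.Injective h := by
    intro x y hxy
    have : hd x y = 0 := by rw [← hh]; exact hd_eq_zero_iff.mpr hxy
    exact hd_eq_zero_iff.mp this
  have hwt : ∀ x, hd (h x) zbool = hd x zbool := by
    intro x
    have := hh x zbool
    rwa [hhz] at this
  have hbase : ∀ j, ∃ l, h (ebool j) = ebool l := by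
    intro j
    apply eq_ebool_of_wt_one
    rw [hwt]; exact wt_ebool j
  choose τ hτ using hbase
  have τinj : Function.Injective τ := by
    intro j j' hjj
    have h1 : h (ebool j) = h (ebool j') := by rw [hτ, hτ, hjj]
    have h2 := congrFun (hinj h1) j
    simp only [ebool, decide_eq_decide] at h2
    exact h2.mp (by trivial)
  have τbij : Function.Bijective τ := (Finite.injective_iff_bijective).mp τinj
  set τp : Equiv.Perm (Fin m) := Equiv.ofBijective τ τbij with hτp
  set σf : Fin m → Fin m := fun i => τp.symm i with hσf
  have hστ : ∀ j, σf (τ j) = j := fun j => τp.symm_apply_apply j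
  have hτσ : ∀ i, τ (σf i) = i := fun i => τp.apply_symm_apply i
  have main : ∀ k, ∀ x : Fin m → Bool, hd x zbool = k → h x = fun i => x (σf i) := by
    intro k
    induction k using Nat.strong_induction_on with
    | _ k ih =>
      intro x hx
      match k, hx with
      | 0, hx =>
        have : x = zbool := hd_eq_zero_iff.mp hx
        subst this
        rw [hhz]
        funext i; simp [zbool]
      | 1, hx =>
        obtain ⟨j, rfl⟩ := eq_ebool_of_wt_one hx
        rw [hτ j]
        funext i
        simp only [ebool, decide_eq_decide]
        constructor
        · intro hi; subst hi; exact hστ j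
        · intro hi; rw [← hi, hτσ]
      | (k+2), hx =>
        have hne : x ≠ zbool := by
          intro hxz; rw [hxz, hd_eq_zero_iff.mpr rfl] at hx; omega
        obtain ⟨j, hj⟩ : ∃ j, x j = true := by
          by_contra hcon
          push_neg at hcon
          exact hne (funext fun i => by
            have := hcon i; revert this; cases x i <;> simp [zbool])
        set y : Fin m → Bool := Function.update x j false with hy
        have hyj : y j = false := by simp [hy]
        have hyi : ∀ i, i ≠ j → y i = x i := fun i hij => Function.update_of_ne hij _ _
        have hfy : (Finset.univ.filter fun i => y i ≠ zbool i)
            = (Finset.univ.filter fun i => x i ≠ zbool i).erase j := by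
          ext i
          by_cases hij : i = j
          · subst hij; simp [hyj, zbool]
          · simp [hyi i hij, hij, zbool]
        have hwy : hd y zbool = k + 1 := by
          unfold hd
          rw [hfy, Finset.card_erase_of_mem (by simp [hj, zbool])]
          unfold hd at hx
          omega
        have hdxy : hd x y = 1 := by
          unfold hd
          have : (Finset.univ.filter fun i => x i ≠ y i) = {j} := by
            ext i
            by_cases hij : i = j
            · subst hij; simp [hyj, hj]
            · simp [hyi i hij, hij]
          rw [this, Finset.card_singleton]
        have ihy : h y = fun i => y (σf i) := ih (k+1) (by omega) y hwy
        obtain ⟨l, hl⟩ := hd_eq_one (a := h x) (b := h y) (by rw [hh]; exact hdxy)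
        have hwx : hd (h x) zbool = k + 2 := by rw [hwt]; exact hx
        have hwyh : hd (h y) zbool = k + 1 := by rw [hwt]; exact hwy
        have hyl : h y l = false := by
          by_contra hcon
          have hyl' : h y l = true := by revert hcon; cases h y l <;> simp
          have hxl : h x l = false := by
            have := (hl l).mpr rfl
            revert this; rw [hyl']; cases h x l <;> simp
          have hfx : (Finset.univ.filter fun i => h x i ≠ zbool i)
              = (Finset.univ.filter fun i => h y i ≠ zbool i).erase l := by
            ext i
            by_cases hil : i = l
            · subst hil; simp [hxl, zbool]
            · have : h x i = h y i := by
                by_contra hcon2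
                exact hil ((hl i).mp hcon2)
              simp [this, hil]
          unfold hd at hwx hwyh
          rw [hfx, Finset.card_erase_of_mem (by simp [hyl', zbool])] at hwx
          omega
        have hxl : h x l = true := by
          have := (hl l).mpr rfl
          revert this; rw [hyl]; cases h x l <;> simp
        have hlτ : l = τ j := by
          by_contra hlτ
          have h1 : hd (h x) (ebool (τ j)) = k + 1 := by
            rw [← hτ j, hh, hd_single]
            simp only [hj, if_true]
            omega
          have hxτj : h x (τ j) = false := by
            have hne' : h x (τ j) = h y (τ j) := by
              by_contra hcon2
              exact hlτ (((hl (τ j)).mp hcon2).symm)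
            rw [hne', ihy]
            show y (σf (τ j)) = false
            rw [hστ j, hyj]
          have h2 : hd (h x) (ebool (τ j)) = k + 3 := by
            rw [hd_single, hxτj]
            simp only [Bool.false_eq_true, if_false]
            omega
          omega
        funext i
        by_cases hil : i = l
        · subst hil
          rw [hxl, hlτ, hστ j, hj]
        · have heq : h x i = h y i := by
            by_contra hcon2
            exact hil ((hl i).mp hcon2)
          rw [heq, ihy]
          show y (σf i) = x (σf i)
          exact hyi (σf i) (fun hcon3 => hil (by rw [hlτ, ← hcon3, hτσ i]))
  refine ⟨τp.symm, fun i => g zbool i, fun x i => ?_⟩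
  have hmx : h x i = x (τp.symm i) := congrFun (main (hd x zbool) x rfl) i
  have hmx' : xor (g x i) (g zbool i) = x (τp.symm i) := hmx
  show g x i = xor (g zbool i) (x (τp.symm i))
  rw [← hmx']
  cases g x i <;> cases g zbool i <;> rfl



lemma card_pair (hn : 3 ≤ n) {t : ZMod (2*n)} (ht : t = 0 ∨ t = 2 ∨ t = -2) :
    Nat.card {s : ZMod (2*n) // (s = 1 ∨ s = -1) ∧ (t + s = 1 ∨ t + s = -1)}
      = if t = 0 then 2 else 1 := by
  haveI : NeZero (2*n) := ⟨by omega⟩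
  have t2 := two_nz hn
  have t4 := four_nz hn
  rcases ht with ht | ht | ht <;> subst ht
  · rw [if_pos rfl]
    have hiff : ∀ s : ZMod (2*n),
        ((s = 1 ∨ s = -1) ∧ ((0:ZMod (2*n)) + s = 1 ∨ (0:ZMod (2*n)) + s = -1))
          ↔ (s = 1 ∨ s = -1) := by
      intro s
      constructor
      · exact fun h => h.1
      · intro h; exact ⟨h, by rwa [zero_add]⟩
    rw [Nat.card_congr (Equiv.subtypeEquivRight hiff), Nat.card_eq_fintype_card,
      Fintype.card_subtype]
    have : (Finset.univ.filter fun s : ZMod (2*n) => s = 1 ∨ s = -1)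
        = {1, -1} := by
      ext s; simp
    rw [this, Finset.card_insert_of_notMem (by simp [one_ne_neg_one hn]),
      Finset.card_singleton]
  · rw [if_neg t2]
    have hiff : ∀ s : ZMod (2*n),
        ((s = 1 ∨ s = -1) ∧ ((2:ZMod (2*n)) + s = 1 ∨ (2:ZMod (2*n)) + s = -1))
          ↔ s = -1 := by
      intro s
      constructor
      · rintro ⟨h1 | h1, h2⟩
        · subst h1
          exfalso
          rcases h2 with h | h
          · exact t2 (by linear_combination h)
          · exact t4 (by linear_combination h)
        · exact h1
      · rintro rfl
        exact ⟨Or.inr rfl, Or.inl (by ring)⟩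
    rw [Nat.card_congr (Equiv.subtypeEquivRight hiff), Nat.card_eq_fintype_card,
      Fintype.card_subtype_eq]
  · rw [if_neg (by intro h; exact t2 (by linear_combination -h))]
    have hiff : ∀ s : ZMod (2*n),
        ((s = 1 ∨ s = -1) ∧ ((-2:ZMod (2*n)) + s = 1 ∨ (-2:ZMod (2*n)) + s = -1))
          ↔ s = 1 := by
      intro s
      constructor
      · rintro ⟨h1 | h1, h2⟩
        · exact h1
        · subst h1
          exfalso
          rcases h2 with h | h
          · exact t4 (by linear_combination -h)
          · exact t2 (by linear_combination -h)
      · rintro rfl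
        exact ⟨Or.inl rfl, Or.inr (by ring)⟩
    rw [Nat.card_congr (Equiv.subtypeEquivRight hiff), Nat.card_eq_fintype_card,
      Fintype.card_subtype_eq]

lemma card_common (hn : 3 ≤ n) (hm : 1 ≤ m) {x y : Fin m → ZMod (2*n)}
    (hx : x ∈ suppSet n m) (hy : y ∈ suppSet n m)
    (hxy : ∀ i, x i = y i ∨ x i - y i = 2 ∨ x i - y i = -2) :
    Nat.card {z : suppSet n m // (cycleTensorComp n m).Adj ⟨x, hx⟩ z ∧
        (cycleTensorComp n m).Adj ⟨y, hy⟩ z}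
      = 2 ^ (Finset.univ.filter fun i => x i = y i).card := by
  classical
  set t : Fin m → ZMod (2*n) := y - x with htdef
  have key : ∀ z : suppSet n m,
      ((cycleTensorComp n m).Adj ⟨x, hx⟩ z ∧ (cycleTensorComp n m).Adj ⟨y, hy⟩ z)
        ↔ ∀ i, ((x - z.1) i = 1 ∨ (x - z.1) i = -1) ∧
            (t i + (x - z.1) i = 1 ∨ t i + (x - z.1) i = -1) := by
    intro z
    rw [comp_adj, comp_adj, adj_iff hn hm, adj_iff hn hm]
    constructor
    · intro ⟨h1, h2⟩ i
      refine ⟨h1 i, ?_⟩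
      have : t i + (x - z.1) i = (y - z.1) i := by
        simp only [htdef, Pi.add_apply, Pi.sub_apply]
        ring
      rw [this]
      exact h2 i
    · intro h
      refine ⟨fun i => (h i).1, fun i => ?_⟩
      have : (y - z.1) i = t i + (x - z.1) i := by
        simp only [htdef, Pi.add_apply, Pi.sub_apply]
        ring
      rw [this]
      exact (h i).2
  -- transfer to the δ-type
  have e1 : {z : suppSet n m // (cycleTensorComp n m).Adj ⟨x, hx⟩ z ∧
        (cycleTensorComp n m).Adj ⟨y, hy⟩ z}
      ≃ {δ : Fin m → ZMod (2*n) // ∀ i, (δ i = 1 ∨ δ i = -1) ∧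
          (t i + δ i = 1 ∨ t i + δ i = -1)} := by
    refine ⟨fun z => ⟨x - z.1.1, (key z).mp z.2⟩, fun δ =>
      ⟨⟨x - δ.1, mem_supp_of_isPm_sub hn hm hx
        (by intro i; have := (δ.2 i).1; simpa using this)⟩,
        (key _).mpr (by intro i; have h := δ.2 i; simpa using h)⟩, ?_, ?_⟩
    · intro z
      apply Subtype.ext
      apply Subtype.ext
      show x - (x - z.1.1) = z.1.1
      abel
    · intro δ
      apply Subtype.ext
      show x - (x - δ.1) = δ.1
      abel
  rw [Nat.card_congr e1,
    Nat.card_congr (Equiv.subtypePiEquivPi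
      (p := fun i s => (s = 1 ∨ s = -1) ∧ (t i + s = 1 ∨ t i + s = -1))),
    Nat.card_pi]
  have hfac : ∀ i, Nat.card {s : ZMod (2*n) // (s = 1 ∨ s = -1) ∧
      (t i + s = 1 ∨ t i + s = -1)} = if x i = y i then 2 else 1 := by
    intro i
    have ht : t i = 0 ∨ t i = 2 ∨ t i = -2 := by
      rcases hxy i with h | h | h
      · left; simp [htdef, h]
      · right; right; simp only [htdef, Pi.sub_apply]; linear_combination -h
      · right; left; simp only [htdef, Pi.sub_apply]; linear_combination -h
    rw [card_pair hn ht]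
    have hiff : (t i = 0) ↔ (x i = y i) := by
      simp only [htdef, Pi.sub_apply]
      rw [sub_eq_zero, eq_comm]
    rw [if_congr hiff rfl rfl]
  rw [Finset.prod_congr rfl (fun i _ => hfac i), Finset.prod_ite, Finset.prod_const,
    Finset.prod_const, one_pow, mul_one]

lemma card_common_map (φ : (cycleTensorComp n m) ≃g (cycleTensorComp n m))
    (a b : suppSet n m) :
    Nat.card {z : suppSet n m // (cycleTensorComp n m).Adj a z ∧
        (cycleTensorComp n m).Adj b z}
      = Nat.card {z : suppSet n m // (cycleTensorComp n m).Adj (φ a) z ∧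
        (cycleTensorComp n m).Adj (φ b) z} := by
  apply Nat.card_congr
  refine φ.toEquiv.subtypeEquiv fun z => ?_
  exact and_congr (φ.map_adj_iff).symm (φ.map_adj_iff).symm

def pmOf (n : ℕ) {m : ℕ} (b : Fin m → Bool) : Fin m → ZMod (2*n) :=
  fun i => if b i then 1 else -1

lemma isPm_pmOf (b : Fin m → Bool) : IsPm n m (pmOf n b) := by
  intro i; unfold pmOf; by_cases h : b i <;> simp [h]

def boolOf {n m : ℕ} (x : Fin m → ZMod (2*n)) : Fin m → Bool := fun i => decide (x i = 1)

lemma neg_one_ne_one (hn : 3 ≤ n) : (-1 : ZMod (2*n)) ≠ 1 :=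
  fun h => one_ne_neg_one hn h.symm

lemma pmOf_boolOf (hn : 3 ≤ n) {x : Fin m → ZMod (2*n)} (hx : IsPm n m x) :
    pmOf n (boolOf x) = x := by
  funext i
  unfold pmOf boolOf
  rcases hx i with h | h
  · simp [h]
  · simp [h, neg_one_ne_one hn]

lemma eq_iff_boolOf (hn : 3 ≤ n) {x y : Fin m → ZMod (2*n)} (hx : IsPm n m x)
    (hy : IsPm n m y) (i : Fin m) : x i = y i ↔ boolOf x i = boolOf y i := by
  unfold boolOf
  rcases hx i with h | h <;> rcases hy i with h' | h' <;> rw [h, h'] <;>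
    simp [neg_one_ne_one hn, one_ne_neg_one hn]

lemma pmOf_eq_iff (hn : 3 ≤ n) (b b' : Fin m → Bool) (i : Fin m) :
    pmOf n b i = pmOf n b' i ↔ b i = b' i := by
  unfold pmOf
  cases hb : b i <;> cases hb' : b' i <;>
    simp [neg_one_ne_one hn, one_ne_neg_one hn]

lemma pm_mem_supp (hn : 3 ≤ n) (hm : 1 ≤ m) {ε : Fin m → ZMod (2*n)} (hε : IsPm n m ε) :
    ε ∈ suppSet n m :=
  mem_supp_of_isPm_sub hn hm zero_mem_supp (by simpa using isPm_neg hε)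

def v0 (n m : ℕ) : suppSet n m := ⟨0, zero_mem_supp⟩

def vtx (hn : 3 ≤ n) (hm : 1 ≤ m) {ε : Fin m → ZMod (2*n)} (hε : IsPm n m ε) :
    suppSet n m := ⟨ε, pm_mem_supp hn hm hε⟩

lemma adj_vtx_v0 (hn : 3 ≤ n) (hm : 1 ≤ m) {ε : Fin m → ZMod (2*n)} (hε : IsPm n m ε) :
    (cycleTensorComp n m).Adj (vtx hn hm hε) (v0 n m) := by
  rw [comp_adj, adj_iff hn hm]
  show IsPm n m (ε - 0)
  simpa using hε

lemma isPm_sub_phi (hn : 3 ≤ n) (hm : 1 ≤ m)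
    (φ : (cycleTensorComp n m) ≃g (cycleTensorComp n m))
    {ε : Fin m → ZMod (2*n)} (hε : IsPm n m ε) :
    IsPm n m ((↑(φ (vtx hn hm hε)) : Fin m → ZMod (2*n)) - ↑(φ (v0 n m))) := by
  have h := (φ.map_adj_iff).mpr (adj_vtx_v0 hn hm hε)
  rw [comp_adj, adj_iff hn hm] at h
  exact h

lemma key (hn : 3 ≤ n) (hm : 1 ≤ m)
    (φ : (cycleTensorComp n m) ≃g (cycleTensorComp n m)) :
    ∃ (σ : Equiv.Perm (Fin m)) (s : Fin m → Bool),
      ∀ (ε : Fin m → ZMod (2*n)) (hε : IsPm n m ε),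
        (↑(φ (vtx hn hm hε)) : Fin m → ZMod (2*n))
          = fun i => (if s i then (-1 : ZMod (2*n)) else 1) * ε (σ i)
              + (↑(φ (v0 n m)) : Fin m → ZMod (2*n)) i := by
  classical
  set F : (Fin m → Bool) → (Fin m → ZMod (2*n)) :=
    fun b => (↑(φ (vtx hn hm (isPm_pmOf b))) : Fin m → ZMod (2*n)) - ↑(φ (v0 n m)) with hF
  have hFpm : ∀ b, IsPm n m (F b) := fun b => isPm_sub_phi hn hm φ _
  set g : (Fin m → Bool) → (Fin m → Bool) := fun b => boolOf (F b) with hg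
  have hdist : ∀ b b', hd (g b) (g b') = hd b b' := by
    intro b b'
    have hε : IsPm n m (pmOf n b) := isPm_pmOf b
    have hε' : IsPm n m (pmOf n b') := isPm_pmOf b'
    have hsub : ∀ i, (↑(φ (vtx hn hm hε)) : Fin m → ZMod (2*n)) i
        - (↑(φ (vtx hn hm hε')) : Fin m → ZMod (2*n)) i = F b i - F b' i := by
      intro i
      simp only [hF, Pi.sub_apply]
      ring
    have m1 := card_common hn hm (pm_mem_supp hn hm hε) (pm_mem_supp hn hm hε')
      (fun i => pm1_sub hn (hε i) (hε' i))
    have hxy : ∀ i, (↑(φ (vtx hn hm hε)) : Fin m → ZMod (2*n)) i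
        = (↑(φ (vtx hn hm hε')) : Fin m → ZMod (2*n)) i ∨
        (↑(φ (vtx hn hm hε)) : Fin m → ZMod (2*n)) i
          - (↑(φ (vtx hn hm hε')) : Fin m → ZMod (2*n)) i = 2 ∨
        (↑(φ (vtx hn hm hε)) : Fin m → ZMod (2*n)) i
          - (↑(φ (vtx hn hm hε')) : Fin m → ZMod (2*n)) i = -2 := by
      intro i
      rcases pm1_sub hn (hFpm b i) (hFpm b' i) with h | h | h
      · left
        have := hsub i
        rw [h] at this
        have h0 : (↑(φ (vtx hn hm hε)) : Fin m → ZMod (2*n)) i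
            - (↑(φ (vtx hn hm hε')) : Fin m → ZMod (2*n)) i = 0 := by
          rw [this]; ring
        exact sub_eq_zero.mp h0
      · right; left; rw [hsub i]; exact h
      · right; right; rw [hsub i]; exact h
    have m2 := card_common hn hm (φ (vtx hn hm hε)).2 (φ (vtx hn hm hε')).2 hxy
    have m3 := card_common_map φ (vtx hn hm hε) (vtx hn hm hε')
    have epow : (2:ℕ) ^ (Finset.univ.filter fun i => pmOf n b i = pmOf n b' i).card
        = 2 ^ (Finset.univ.filter fun i =>
            (↑(φ (vtx hn hm hε)) : Fin m → ZMod (2*n)) i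
              = (↑(φ (vtx hn hm hε')) : Fin m → ZMod (2*n)) i).card := by
      rw [← m1, ← m2]
      exact m3
    have ecard := Nat.pow_right_injective (le_refl 2) epow
    -- translate both filters to bool filters
    have hfb : (Finset.univ.filter fun i => pmOf n b i = pmOf n b' i)
        = (Finset.univ.filter fun i => b i = b' i) := by
      ext i
      simp only [Finset.mem_filter, Finset.mem_univ, true_and]
      exact pmOf_eq_iff hn b b' i
    have hfg : (Finset.univ.filter fun i =>
          (↑(φ (vtx hn hm hε)) : Fin m → ZMod (2*n)) i
            = (↑(φ (vtx hn hm hε')) : Fin m → ZMod (2*n)) i)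
        = (Finset.univ.filter fun i => g b i = g b' i) := by
      ext i
      simp only [Finset.mem_filter, Finset.mem_univ, true_and]
      constructor
      · intro h
        have hFeq : F b i = F b' i := by
          have := hsub i
          rw [h] at this
          have h0 : F b i - F b' i = 0 := by rw [← this]; ring
          exact sub_eq_zero.mp h0
        show boolOf (F b) i = boolOf (F b') i
        exact (eq_iff_boolOf hn (hFpm b) (hFpm b') i).mp hFeq
      · intro h
        have hFeq : F b i = F b' i :=
          (eq_iff_boolOf hn (hFpm b) (hFpm b') i).mpr h
        have := hsub i
        rw [hFeq] at this
        have h0 : (↑(φ (vtx hn hm hε)) : Fin m → ZMod (2*n)) i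
            - (↑(φ (vtx hn hm hε')) : Fin m → ZMod (2*n)) i = 0 := by rw [this]; ring
        exact sub_eq_zero.mp h0
    rw [hfb] at ecard
    rw [hfg] at ecard
    have c1 := Finset.card_filter_add_card_filter_not
      (s := (Finset.univ : Finset (Fin m))) (p := fun i => b i = b' i)
    have c2 := Finset.card_filter_add_card_filter_not
      (s := (Finset.univ : Finset (Fin m))) (p := fun i => g b i = g b' i)
    have hdb : hd b b' = (Finset.univ.filter fun i => ¬ b i = b' i).card := by
      unfold hd; congr 1
    have hdg : hd (g b) (g b') = (Finset.univ.filter fun i => ¬ g b i = g b' i).card := by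
      unfold hd; congr 1
    omega
  obtain ⟨σ, s, hgs⟩ := hypercube_classify g hdist
  refine ⟨σ, s, fun ε hε => ?_⟩
  have hb : pmOf n (boolOf ε) = ε := pmOf_boolOf hn hε
  have hvtx : vtx hn hm (isPm_pmOf (boolOf ε)) = vtx hn hm hε := Subtype.ext hb
  funext i
  have hFi' : F (boolOf ε) i
      = (↑(φ (vtx hn hm hε)) : Fin m → ZMod (2*n)) i - (↑(φ (v0 n m)) : Fin m → ZMod (2*n)) i := by
    simp only [hF, hvtx, Pi.sub_apply]
  have h5 : boolOf (F (boolOf ε)) i = xor (s i) (boolOf ε (σ i)) := hgs (boolOf ε) i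
  have hmain : F (boolOf ε) i = (if s i then (-1 : ZMod (2*n)) else 1) * ε (σ i) := by
    have hrepr := (congrFun (pmOf_boolOf hn (hFpm (boolOf ε))) i).symm
    rw [hrepr]
    show (if boolOf (F (boolOf ε)) i then (1 : ZMod (2*n)) else -1) = _
    rw [h5]
    rcases hε (σ i) with h | h
    · have hbσ : boolOf ε (σ i) = true := by unfold boolOf; rw [h]; simp
      rw [h, hbσ]
      cases hs : s i <;> simp
    · have hbσ : boolOf ε (σ i) = false := by
        unfold boolOf; rw [h]; simp [neg_one_ne_one hn]
      rw [h, hbσ]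
      cases hs : s i <;> simp
  linear_combination hmain - hFi'

lemma isPm_neg' {x y : Fin m → ZMod (2*n)} (h : IsPm n m (x - y)) : IsPm n m (y - x) := by
  have := isPm_neg h
  have hxy : -(x - y) = y - x := by abel
  rwa [hxy] at this

lemma spread (hn : 3 ≤ n) (hm : 1 ≤ m)
    (ψ : (cycleTensorComp n m) ≃g (cycleTensorComp n m))
    (u : suppSet n m) (hu : ψ u = u)
    (hN : ∀ z, (cycleTensorComp n m).Adj u z → ψ z = z)
    (w : suppSet n m) (hw : (cycleTensorComp n m).Adj u w) :
    ∀ z, (cycleTensorComp n m).Adj w z → ψ z = z := by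
  intro z hz
  have hww : ψ w = w := hN w hw
  have hz' : (cycleTensorComp n m).Adj w (ψ z) := by
    have := (ψ.map_adj_iff (v := w) (w := z)).mpr hz
    rwa [hww] at this
  have hab : IsPm n m (↑u - ↑w) := (adj_iff hn hm).mp (comp_adj.mp hw)
  have hbc : IsPm n m (↑w - ↑z) := (adj_iff hn hm).mp (comp_adj.mp hz)
  have hbc' : IsPm n m (↑w - ↑(ψ z)) := (adj_iff hn hm).mp (comp_adj.mp hz')
  have H : ∀ y : suppSet n m, (cycleTensorComp n m).Adj u y →
      ((cycleTensorComp n m).Adj z y ↔ (cycleTensorComp n m).Adj (ψ z) y) := by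
    intro y hy
    conv_rhs => rw [← hN y hy]
    exact (ψ.map_adj_iff (v := z) (w := y)).symm
  -- abbreviations
  set a : Fin m → ZMod (2*n) := ↑u with hadef
  set b : Fin m → ZMod (2*n) := ↑w with hbdef
  set c : Fin m → ZMod (2*n) := ↑z with hcdef
  set c' : Fin m → ZMod (2*n) := ↑(ψ z) with hc'def
  -- first witness y₀ := a - (b - c')
  have hy0pm : IsPm n m (a - (a - (b - c'))) := by
    have : a - (a - (b - c')) = b - c' := by abel
    rw [this]; exact hbc'
  have hy0supp : (a - (b - c')) ∈ suppSet n m :=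
    mem_supp_of_isPm_sub hn hm u.2 hy0pm
  have hy0adj : (cycleTensorComp n m).Adj u ⟨a - (b - c'), hy0supp⟩ := by
    rw [comp_adj, adj_iff hn hm]; exact hy0pm
  have H0 := H ⟨a - (b - c'), hy0supp⟩ hy0adj
  rw [comp_adj, comp_adj, adj_iff hn hm, adj_iff hn hm] at H0
  have hcy0' : IsPm n m (c' - (a - (b - c'))) := by
    have : c' - (a - (b - c')) = b - a := by abel
    rw [this]
    exact isPm_neg' hab
  have hcy0 : IsPm n m (c - (a - (b - c'))) := H0.mpr hcy0'
  -- second witness y₁ := a - (b - c)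
  have hy1pm : IsPm n m (a - (a - (b - c))) := by
    have : a - (a - (b - c)) = b - c := by abel
    rw [this]; exact hbc
  have hy1supp : (a - (b - c)) ∈ suppSet n m :=
    mem_supp_of_isPm_sub hn hm u.2 hy1pm
  have hy1adj : (cycleTensorComp n m).Adj u ⟨a - (b - c), hy1supp⟩ := by
    rw [comp_adj, adj_iff hn hm]; exact hy1pm
  have H1 := H ⟨a - (b - c), hy1supp⟩ hy1adj
  rw [comp_adj, comp_adj, adj_iff hn hm, adj_iff hn hm] at H1
  have hcy1 : IsPm n m (c - (a - (b - c))) := by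
    have : c - (a - (b - c)) = b - a := by abel
    rw [this]
    exact isPm_neg' hab
  have hcy1' : IsPm n m (c' - (a - (b - c))) := H1.mp hcy1
  -- conclude coordinatewise
  symm
  apply Subtype.ext
  show c = c'
  funext j
  have hcancel := pm1_cancel hn (a := a j - b j) (b := b j - c j) (c := b j - c' j)
    (by have := hab j; simpa using this)
    (by have := hbc j; simpa using this)
    (by have := hbc' j; simpa using this)
    (by
      have h0 := hcy0 j
      simp only [Pi.sub_apply] at h0
      rcases h0 with h0 | h0
      · right; linear_combination -h0
      · left; linear_combination -h0)
    (by
      have h1 := hcy1' j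
      simp only [Pi.sub_apply] at h1
      rcases h1 with h1 | h1
      · right; linear_combination -h1
      · left; linear_combination -h1)
  linear_combination -hcancel

lemma rigid (hn : 3 ≤ n) (hm : 1 ≤ m)
    (ψ : (cycleTensorComp n m) ≃g (cycleTensorComp n m))
    (h0 : ψ (v0 n m) = v0 n m)
    (hN : ∀ z, (cycleTensorComp n m).Adj (v0 n m) z → ψ z = z) :
    ∀ x, ψ x = x := by
  have main : ∀ (p q : Fin m → ZMod (2*n)) (_ : (cycleTensor n m).Walk p q),
      ∀ (hp : p ∈ suppSet n m) (hq : q ∈ suppSet n m),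
      (ψ ⟨p, hp⟩ = ⟨p, hp⟩ ∧ ∀ z, (cycleTensorComp n m).Adj ⟨p, hp⟩ z → ψ z = z) →
      (ψ ⟨q, hq⟩ = ⟨q, hq⟩ ∧ ∀ z, (cycleTensorComp n m).Adj ⟨q, hq⟩ z → ψ z = z) := by
    intro p q wlk
    induction wlk with
    | nil =>
      intro hp hq h
      exact h
    | @cons pu pv pq hadj wlk' ih =>
      intro hp hq hP
      have hv : pv ∈ suppSet n m := mem_supp_of_adj hp hadj
      apply ih hv hq
      have hadjΓ : (cycleTensorComp n m).Adj ⟨pu, hp⟩ ⟨pv, hv⟩ := comp_adj.mpr hadj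
      exact ⟨hP.2 _ hadjΓ, spread hn hm ψ ⟨pu, hp⟩ hP.1 hP.2 ⟨pv, hv⟩ hadjΓ⟩
  intro x
  have hreach : (cycleTensor n m).Reachable 0 ↑x := by
    have hx := x.2
    rw [SimpleGraph.ConnectedComponent.mem_supp_iff] at hx
    exact (SimpleGraph.ConnectedComponent.exact hx).symm
  obtain ⟨wlk⟩ := hreach
  have := main 0 ↑x wlk zero_mem_supp x.2 ⟨h0, hN⟩
  exact this.1

lemma neg_mul_pm_iff (hn : 3 ≤ n) (si : Bool) (d : ZMod (2*n)) :
    (d = 1 ∨ d = -1) ↔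
      ((if si then (-1 : ZMod (2*n)) else 1) * d = 1 ∨
        (if si then (-1 : ZMod (2*n)) else 1) * d = -1) := by
  cases si
  · simp
  · simp only [if_true]
    constructor
    · rintro (h | h)
      · right; rw [h]; ring
      · left; rw [h]; ring
    · rintro (h | h)
      · right; linear_combination -h
      · left; linear_combination -h

lemma isPm_of_adj_v0 (hn : 3 ≤ n) (hm : 1 ≤ m) {z : suppSet n m}
    (hz : (cycleTensorComp n m).Adj (v0 n m) z) :
    IsPm n m (↑z : Fin m → ZMod (2*n)) := by
  have h1 : IsPm n m ((0 : Fin m → ZMod (2*n)) - ↑z) := (adj_iff hn hm).mp (comp_adj.mp hz)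
  have h2 := isPm_neg h1
  have h3 : -((0 : Fin m → ZMod (2*n)) - ↑z) = ↑z := by abel
  rwa [h3] at h2

lemma part2 (hn : 3 ≤ n) (hm : 1 ≤ m)
    (φ : (cycleTensorComp n m) ≃g (cycleTensorComp n m)) :
    ∃ (σ : Equiv.Perm (Fin m)) (ρ : Fin m → (ZMod (2 * n) ≃ ZMod (2 * n))),
      (∀ i (a b : ZMod (2 * n)),
        (a - b = 1 ∨ a - b = -1) ↔ (ρ i a - ρ i b = 1 ∨ ρ i a - ρ i b = -1)) ∧
      ∀ x : suppSet n m,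
        (↑(φ x) : Fin m → ZMod (2 * n)) =
          fun i => ρ i ((↑x : Fin m → ZMod (2 * n)) (σ i)) := by
  obtain ⟨σ, s, hkey⟩ := key hn hm φ
  set c : Fin m → ZMod (2*n) := ↑(φ (v0 n m)) with hc
  set sg : Fin m → ZMod (2*n) := fun i => if s i then -1 else 1 with hsg
  have hsg1 : ∀ i, sg i * sg i = 1 := by
    intro i; by_cases h : s i <;> simp [hsg, h]
  set ρ : Fin m → (ZMod (2*n) ≃ ZMod (2*n)) := fun i =>
    { toFun := fun a => sg i * a + c i
      invFun := fun a => sg i * (a - c i)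
      left_inv := by
        intro a
        show sg i * (sg i * a + c i - c i) = a
        rw [add_sub_cancel_right, ← mul_assoc, hsg1, one_mul]
      right_inv := by
        intro a
        show sg i * (sg i * (a - c i)) + c i = a
        rw [← mul_assoc, hsg1, one_mul, sub_add_cancel] } with hρ
  have hρdiff : ∀ i (a b0 : ZMod (2*n)), ρ i a - ρ i b0 = sg i * (a - b0) := by
    intro i a b0
    show (sg i * a + c i) - (sg i * b0 + c i) = sg i * (a - b0)
    ring
  set Φ : (Fin m → ZMod (2*n)) ≃ (Fin m → ZMod (2*n)) :=
    { toFun := fun x i => sg i * x (σ i) + c i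
      invFun := fun y j => sg (σ.symm j) * (y (σ.symm j) - c (σ.symm j))
      left_inv := by
        intro x; funext j
        show sg (σ.symm j) * ((sg (σ.symm j) * x (σ (σ.symm j)) + c (σ.symm j))
          - c (σ.symm j)) = x j
        rw [add_sub_cancel_right, ← mul_assoc, hsg1, one_mul, Equiv.apply_symm_apply]
      right_inv := by
        intro y; funext i
        show sg i * (sg (σ.symm (σ i)) * (y (σ.symm (σ i)) - c (σ.symm (σ i)))) + c i = y i
        rw [Equiv.symm_apply_apply, ← mul_assoc, hsg1, one_mul, sub_add_cancel] } with hΦ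
  have hΦadj : ∀ x y, (cycleTensor n m).Adj (Φ x) (Φ y) ↔ (cycleTensor n m).Adj x y := by
    intro x y
    rw [adj_iff hn hm, adj_iff hn hm]
    constructor
    · intro h j
      have hthis := h (σ.symm j)
      have hrw : (Φ x - Φ y) (σ.symm j) = sg (σ.symm j) * ((x - y) (σ (σ.symm j))) := by
        show (sg _ * x (σ (σ.symm j)) + c _) - (sg _ * y (σ (σ.symm j)) + c _) = _
        simp only [Pi.sub_apply]; ring
      rw [hrw, Equiv.apply_symm_apply] at hthis
      exact (neg_mul_pm_iff hn (s (σ.symm j)) ((x - y) j)).mpr hthis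
    · intro h i
      have hrw : (Φ x - Φ y) i = sg i * ((x - y) (σ i)) := by
        show (sg i * x (σ i) + c i) - (sg i * y (σ i) + c i) = _
        simp only [Pi.sub_apply]; ring
      rw [hrw]
      exact (neg_mul_pm_iff hn (s i) ((x - y) (σ i))).mp (h (σ i))
  set Giso : (cycleTensor n m) ≃g (cycleTensor n m) :=
    ⟨Φ, by intro x y; exact hΦadj x y⟩ with hGiso
  have hΦ0 : Φ 0 = c := by
    funext i
    show sg i * (0 : Fin m → ZMod (2*n)) (σ i) + c i = c i
    simp
  have hreach : ∀ x : Fin m → ZMod (2*n),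
      x ∈ suppSet n m ↔ (cycleTensor n m).Reachable x 0 := by
    intro x
    rw [SimpleGraph.ConnectedComponent.mem_supp_iff]
    exact ⟨fun h => SimpleGraph.ConnectedComponent.exact h,
      fun h => SimpleGraph.ConnectedComponent.sound h⟩
  have hsupp : ∀ x : Fin m → ZMod (2*n), x ∈ suppSet n m ↔ Φ x ∈ suppSet n m := by
    intro x
    have h2 : (cycleTensor n m).Reachable c 0 := (hreach c).mp (φ (v0 n m)).2
    constructor
    · intro hx
      rw [hreach] at hx ⊢
      have h1 : (cycleTensor n m).Reachable (Φ x) (Φ 0) := hx.map Giso.toHom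
      rw [hΦ0] at h1
      exact h1.trans h2
    · intro hx
      rw [hreach] at hx ⊢
      have h4 : (cycleTensor n m).Reachable (Φ.symm (Φ x)) (Φ.symm c) :=
        (hx.trans h2.symm).map Giso.symm.toHom
      have hsymc : Φ.symm c = 0 := by
        funext j
        show sg (σ.symm j) * (c (σ.symm j) - c (σ.symm j)) = 0
        simp
      rwa [Φ.symm_apply_apply, hsymc] at h4
  set Ψ : (cycleTensorComp n m) ≃g (cycleTensorComp n m) :=
    { toEquiv := Φ.subtypeEquiv hsupp
      map_rel_iff' := by
        intro a b
        rw [comp_adj, comp_adj]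
        exact hΦadj ↑a ↑b } with hΨ
  have hΨv0 : Ψ (v0 n m) = φ (v0 n m) := by
    apply Subtype.ext
    show Φ 0 = c
    exact hΦ0
  have hΨvtx : ∀ (ε : Fin m → ZMod (2*n)) (hε : IsPm n m ε),
      Ψ (vtx hn hm hε) = φ (vtx hn hm hε) := by
    intro ε hε
    apply Subtype.ext
    rw [hkey ε hε]
    rfl
  set ψc := φ.trans Ψ.symm with hψc
  have hψ0 : ψc (v0 n m) = v0 n m := by
    show Ψ.symm (φ (v0 n m)) = v0 n m
    rw [← hΨv0]
    exact Ψ.symm_apply_apply _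
  have hψN : ∀ z, (cycleTensorComp n m).Adj (v0 n m) z → ψc z = z := by
    intro z hz
    have hεz := isPm_of_adj_v0 hn hm hz
    have hzvtx : z = vtx hn hm hεz := Subtype.ext rfl
    rw [hzvtx]
    show Ψ.symm (φ (vtx hn hm hεz)) = vtx hn hm hεz
    rw [← hΨvtx _ hεz]
    exact Ψ.symm_apply_apply _
  have hall := rigid hn hm ψc hψ0 hψN
  refine ⟨σ, ρ, ?_, ?_⟩
  · intro i a b0
    rw [hρdiff i a b0]
    exact neg_mul_pm_iff hn (s i) (a - b0)
  · intro x
    have h7 : Ψ.symm (φ x) = x := hall x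
    have h8 := congrArg Ψ h7
    rw [Ψ.apply_symm_apply] at h8
    rw [h8]
    rfl

lemma part1 (hn : 3 ≤ n) (hm : 1 ≤ m) :
    Nat.card {φ : (cycleTensorComp n m) ≃g (cycleTensorComp n m) //
      φ (v0 n m) = v0 n m} ≤ 2 ^ m * Nat.factorial m := by
  classical
  haveI : NeZero (2*n) := ⟨by omega⟩
  set H : Set ((Fin m → Bool) → (Fin m → Bool)) :=
    Set.range (fun p : Equiv.Perm (Fin m) × (Fin m → Bool) =>
      fun b i => xor (p.2 i) (b (p.1 i))) with hH
  set θ : {φ : (cycleTensorComp n m) ≃g (cycleTensorComp n m) // φ (v0 n m) = v0 n m} →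
      ((Fin m → Bool) → (Fin m → Bool)) :=
    fun φS => fun b => boolOf (↑(φS.1 (vtx hn hm (isPm_pmOf b))) : Fin m → ZMod (2*n))
    with hθ
  have hpmimg : ∀ (φS : {φ : (cycleTensorComp n m) ≃g (cycleTensorComp n m) //
      φ (v0 n m) = v0 n m}) (ε : Fin m → ZMod (2*n)) (hε : IsPm n m ε),
      IsPm n m (↑(φS.1 (vtx hn hm hε)) : Fin m → ZMod (2*n)) := by
    intro φS ε hε
    have h := isPm_sub_phi hn hm φS.1 hε
    have hc0 : (↑(φS.1 (v0 n m)) : Fin m → ZMod (2*n)) = 0 := by rw [φS.2]; rfl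
    rwa [hc0, sub_zero] at h
  have hθH : ∀ φS, θ φS ∈ H := by
    intro φS
    obtain ⟨σ, s, hkey⟩ := key hn hm φS.1
    refine ⟨(σ, s), ?_⟩
    funext b i
    show xor (s i) (b (σ i))
      = boolOf (↑(φS.1 (vtx hn hm (isPm_pmOf b))) : Fin m → ZMod (2*n)) i
    have hc0 : (↑(φS.1 (v0 n m)) : Fin m → ZMod (2*n)) = 0 := by rw [φS.2]; rfl
    have hco := congrFun (hkey (pmOf n b) (isPm_pmOf b)) i
    rw [congrFun hc0 i] at hco
    unfold boolOf
    rw [hco]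
    show xor (s i) (b (σ i))
      = decide ((if s i then (-1 : ZMod (2*n)) else 1) * pmOf n b (σ i) + 0 = 1)
    rw [add_zero]
    unfold pmOf
    cases hs : s i <;> cases hb : b (σ i) <;>
      simp [one_ne_neg_one hn, neg_one_ne_one hn]
  have hθinj : Function.Injective θ := by
    intro φ1 φ2 heq
    have himg : ∀ (ε : Fin m → ZMod (2*n)) (hε : IsPm n m ε),
        φ1.1 (vtx hn hm hε) = φ2.1 (vtx hn hm hε) := by
      intro ε hε
      have hbε : vtx hn hm (isPm_pmOf (boolOf ε)) = vtx hn hm hε :=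
        Subtype.ext (pmOf_boolOf hn hε)
      rw [← hbε]
      apply Subtype.ext
      calc (↑(φ1.1 (vtx hn hm (isPm_pmOf (boolOf ε)))) : Fin m → ZMod (2*n))
          = pmOf n (θ φ1 (boolOf ε)) :=
            (pmOf_boolOf hn (hpmimg φ1 _ (isPm_pmOf (boolOf ε)))).symm
        _ = pmOf n (θ φ2 (boolOf ε)) := by rw [heq]
        _ = ↑(φ2.1 (vtx hn hm (isPm_pmOf (boolOf ε)))) :=
            pmOf_boolOf hn (hpmimg φ2 _ (isPm_pmOf (boolOf ε)))
    set ψc := φ1.1.trans φ2.1.symm with hψc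
    have hψ0 : ψc (v0 n m) = v0 n m := by
      show φ2.1.symm (φ1.1 (v0 n m)) = v0 n m
      rw [φ1.2]
      have h2 := congrArg φ2.1.symm φ2.2
      rw [φ2.1.symm_apply_apply] at h2
      exact h2.symm
    have hψN : ∀ z, (cycleTensorComp n m).Adj (v0 n m) z → ψc z = z := by
      intro z hz
      have hεz := isPm_of_adj_v0 hn hm hz
      have hzvtx : z = vtx hn hm hεz := Subtype.ext rfl
      rw [hzvtx]
      show φ2.1.symm (φ1.1 (vtx hn hm hεz)) = vtx hn hm hεz
      rw [himg _ hεz]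
      exact φ2.1.symm_apply_apply _
    have hall := rigid hn hm ψc hψ0 hψN
    apply Subtype.ext
    apply RelIso.ext
    intro x
    have hx : φ2.1.symm (φ1.1 x) = x := hall x
    have h9 := congrArg φ2.1 hx
    rwa [φ2.1.apply_symm_apply] at h9
  have step1 : Nat.card {φ : (cycleTensorComp n m) ≃g (cycleTensorComp n m) //
      φ (v0 n m) = v0 n m} ≤ Nat.card H := by
    apply Nat.card_le_card_of_injective (fun φS => (⟨θ φS, hθH φS⟩ : H))
    intro a b h
    exact hθinj (congrArg Subtype.val h)
  have step2 : Nat.card H ≤ Nat.card (Equiv.Perm (Fin m) × (Fin m → Bool)) :=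
    Nat.card_le_card_of_surjective _ Set.rangeFactorization_surjective
  have step3 : Nat.card (Equiv.Perm (Fin m) × (Fin m → Bool))
      = Nat.factorial m * 2 ^ m := by
    rw [Nat.card_prod, Nat.card_eq_fintype_card, Nat.card_eq_fintype_card,
      Fintype.card_perm, Fintype.card_fin, Fintype.card_fun, Fintype.card_bool,
      Fintype.card_fin]
  calc Nat.card {φ : (cycleTensorComp n m) ≃g (cycleTensorComp n m) //
        φ (v0 n m) = v0 n m}
      ≤ Nat.card H := step1
    _ ≤ Nat.card (Equiv.Perm (Fin m) × (Fin m → Bool)) := step2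
    _ = Nat.factorial m * 2 ^ m := step3
    _ = 2 ^ m * Nat.factorial m := Nat.mul_comm _ _

end CTC

/-- Let `n ≥ 3`, `m ≥ 1`, and let `Γ` be the connected component of
`(0,…,0)` in the tensor product of `m` cycles of length `2n`.  Then the stabilizer
in `Aut(Γ)` of the vertex `v = (0,…,0)` has order at most `2^m · m!`, and hence
every automorphism of `Γ` is of Cartesian type: it is induced by automorphisms of
the cycle factors together with a permutation of the factors. -/
theorem cycle_tensor_component_aut (n m : ℕ) (hn : 3 ≤ n) (hm : 1 ≤ m) :
    Nat.card {φ : (cycleTensorComp n m) ≃g (cycleTensorComp n m) //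
        φ ⟨0, (SimpleGraph.ConnectedComponent.mem_supp_iff _ _).mpr rfl⟩ =
          ⟨0, (SimpleGraph.ConnectedComponent.mem_supp_iff _ _).mpr rfl⟩} ≤
      2 ^ m * Nat.factorial m ∧
    ∀ φ : (cycleTensorComp n m) ≃g (cycleTensorComp n m),
      ∃ (σ : Equiv.Perm (Fin m)) (ρ : Fin m → (ZMod (2 * n) ≃ ZMod (2 * n))),
        (∀ i (a b : ZMod (2 * n)),
          (a - b = 1 ∨ a - b = -1) ↔ (ρ i a - ρ i b = 1 ∨ ρ i a - ρ i b = -1)) ∧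
        ∀ x : ((cycleTensor n m).connectedComponentMk 0).supp,
          (φ x : Fin m → ZMod (2 * n)) =
            fun i => ρ i ((x : Fin m → ZMod (2 * n)) (σ i)) := by
  constructor
  · exact CTC.part1 hn hm
  · intro φ
    exact CTC.part2 hn hm φ
end

section
/- The tensor product of two non-bipartite simple graphs is non-bipartite, and the tensor product of finitely many simple graphs each containing an odd cycle is connected and non-bipartite, provided each factor is connected with at least two vertices. -/
/-- The tensor (direct) product of two simple graphs. -/
def SimpleGraph.directProd {α β : Type} (G : SimpleGraph α) (H : SimpleGraph β) :
    SimpleGraph (α × β) where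
  Adj a b := G.Adj a.1 b.1 ∧ H.Adj a.2 b.2
  symm := ⟨fun _ _ h => ⟨G.adj_symm h.1, H.adj_symm h.2⟩⟩
  loopless := ⟨fun a h => G.irrefl h.1⟩

/-- The tensor (direct) product of a finite family of simple graphs: two distinct
vertices are adjacent iff they are adjacent in every coordinate.  (For a nonempty
index family this agrees with the iterated binary tensor product.) -/
def familyTensor {k : ℕ} {α : Fin k → Type} (G : ∀ i, SimpleGraph (α i)) :
    SimpleGraph (∀ i, α i) where
  Adj x y := x ≠ y ∧ ∀ i, (G i).Adj (x i) (y i)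
  symm := ⟨fun _ _ h => ⟨h.1.symm, fun i => (G i).adj_symm (h.2 i)⟩⟩
  loopless := ⟨fun _ h => h.1 rfl⟩

open SimpleGraph

namespace TensorAux

variable {V : Type*} {Γ : SimpleGraph V}

/-- Build a walk from a vertex sequence with consecutive adjacency. -/
lemma mkWalk (Γ : SimpleGraph V) (f : ℕ → V) :
    ∀ n : ℕ, (∀ t, t < n → Γ.Adj (f t) (f (t + 1))) →
      ∃ w : Γ.Walk (f 0) (f n), w.length = n := by
  intro n
  induction n with
  | zero => exact fun _ => ⟨Walk.nil, rfl⟩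
  | succ n ih =>
    intro h
    obtain ⟨w, hw⟩ := ih fun t ht => h t (ht.trans n.lt_succ_self)
    exact ⟨w.concat (h n n.lt_succ_self), by simp [Walk.length_concat, hw]⟩

lemma not_colorable_two_of_odd_loop {u : V} (w : Γ.Walk u u) (h : Odd w.length) :
    ¬ Γ.Colorable 2 := by
  intro hc
  have h3 := Walk.three_le_chromaticNumber_of_odd_loop w h
  have h2 := hc.chromaticNumber_le
  have : (3 : ℕ∞) ≤ 2 := h3.trans (by exact_mod_cast h2)
  norm_num at this

lemma colorable_two_of_no_odd_loop (h : ∀ (u : V) (w : Γ.Walk u u), ¬ Odd w.length) :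
    Γ.Colorable 2 := by
  classical
  have hreach : ∀ v : V, Γ.Reachable ((Γ.connectedComponentMk v).out) v := by
    intro v
    exact ConnectedComponent.exact ((Γ.connectedComponentMk v).out_eq)
  let c : V → Fin 2 := fun v => if Odd (hreach v).some.length then 1 else 0
  refine ⟨Coloring.mk c ?_⟩
  intro u v huv
  have hcomp : (Γ.connectedComponentMk u) = (Γ.connectedComponentMk v) :=
    ConnectedComponent.connectedComponentMk_eq_of_adj huv
  -- two walks from the same representative to v: parity must agree
  have key : ∀ (r : V) (p q : Γ.Walk r v), (Odd p.length ↔ Odd q.length) := by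
    intro r p q
    have := h r (p.append q.reverse)
    rw [Walk.length_append, Walk.length_reverse] at this
    rw [Nat.not_odd_iff_even, Nat.even_add] at this
    simp only [Nat.odd_iff, Nat.even_iff] at this ⊢
    omega
  have hout : (Γ.connectedComponentMk u).out = (Γ.connectedComponentMk v).out := by
    rw [hcomp]
  have hpar := key ((Γ.connectedComponentMk v).out)
    (((hreach u).some.concat huv).copy hout rfl) (hreach v).some
  rw [Walk.length_copy, Walk.length_concat, Nat.odd_add_one,
    Nat.not_odd_iff_even] at hpar
  intro hc'
  simp only [c] at hc'
  by_cases h1 : Odd (hreach u).some.length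
  · have h2 : ¬ Odd (hreach v).some.length := fun h2 =>
      (Nat.not_even_iff_odd.mpr h1) (hpar.mpr h2)
    rw [if_pos h1, if_neg h2] at hc'
    exact one_ne_zero hc'
  · have h2 : Odd (hreach v).some.length := hpar.mp (Nat.not_odd_iff_even.mp h1)
    rw [if_neg h1, if_pos h2] at hc'
    exact zero_ne_one hc'

lemma exists_odd_loop (h : ¬ Γ.Colorable 2) :
    ∃ (u : V) (w : Γ.Walk u u), Odd w.length := by
  by_contra hc
  push_neg at hc
  exact h (colorable_two_of_no_odd_loop hc)

/-- Pad a walk by 2m steps using a neighbor of the start. -/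
lemma pad {u v z : V} (hz : Γ.Adj u z) (w : Γ.Walk u v) (m : ℕ) :
    ∃ w' : Γ.Walk u v, w'.length = w.length + 2 * m := by
  induction m with
  | zero => exact ⟨w, by omega⟩
  | succ m ih =>
    obtain ⟨w', hw'⟩ := ih
    exact ⟨Walk.cons hz (Walk.cons hz.symm w'), by simp [hw']; omega⟩

lemma pad_to {u v z : V} (hz : Γ.Adj u z) (w : Γ.Walk u v) (L : ℕ)
    (hle : w.length ≤ L) (hpar : (L - w.length) % 2 = 0) :
    ∃ w' : Γ.Walk u v, w'.length = L := by
  obtain ⟨w', hw'⟩ := pad hz w ((L - w.length) / 2)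
  exact ⟨w', by omega⟩

lemma exists_adj_of_loop {u : V} (w : Γ.Walk u u) (h : Odd w.length) : ∃ z, Γ.Adj u z := by
  have hpos : 0 < w.length := h.pos
  exact ⟨w.getVert 1, by simpa using w.adj_getVert_succ hpos⟩

lemma exists_adj (hconn : Γ.Preconnected) [Nontrivial V] (v : V) : ∃ z, Γ.Adj v z := by
  obtain ⟨w, hw⟩ := exists_ne v
  obtain ⟨p⟩ := hconn v w
  have hpos : 0 < p.length := by
    rcases Nat.eq_zero_or_pos p.length with h0 | h0
    · exact absurd (Walk.eq_of_length_eq_zero h0).symm hw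
    · exact h0
  exact ⟨p.getVert 1, by simpa using p.adj_getVert_succ hpos⟩

/-- In a connected graph with an odd closed walk, any two vertices are joined
by a walk of even length. -/
lemma exists_even_walk (hconn : Γ.Preconnected) {c : V} (loop : Γ.Walk c c)
    (hod : Odd loop.length) (u v : V) : ∃ w : Γ.Walk u v, Even w.length := by
  obtain ⟨p⟩ := hconn u v
  rcases Nat.even_or_odd p.length with he | ho
  · exact ⟨p, he⟩
  · obtain ⟨q⟩ := hconn u c
    refine ⟨(q.append (loop.append q.reverse)).append p, ?_⟩
    simp only [Walk.length_append, Walk.length_reverse]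
    rcases hod with ⟨a, ha⟩
    rcases ho with ⟨b, hb⟩
    refine ⟨q.length + a + b + 1, by omega⟩

end TensorAux

open TensorAux

/-- The tensor product of two non-bipartite simple graphs is
non-bipartite; and the tensor product of finitely many simple graphs, each
connected with at least two vertices and containing an odd cycle (i.e.
non-bipartite), is connected and non-bipartite. -/
theorem tensor_nonbipartite_connected :
    (∀ {α β : Type} (G : SimpleGraph α) (H : SimpleGraph β),
      ¬ G.Colorable 2 → ¬ H.Colorable 2 → ¬ (G.directProd H).Colorable 2) ∧
    (∀ (k : ℕ) (α : Fin k → Type) (G : ∀ i, SimpleGraph (α i)), 1 ≤ k →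
      (∀ i, (G i).Connected) → (∀ i, Nontrivial (α i)) →
      (∀ i, ¬ (G i).Colorable 2) →
      (familyTensor G).Connected ∧ ¬ (familyTensor G).Colorable 2) := by
  constructor
  · -- Part 1
    intro α β G H hG hH
    obtain ⟨a, w1, h1⟩ := exists_odd_loop hG
    obtain ⟨b, w2, h2⟩ := exists_odd_loop hH
    obtain ⟨z1, hz1⟩ := exists_adj_of_loop w1 h1
    obtain ⟨z2, hz2⟩ := exists_adj_of_loop w2 h2
    set L := w1.length + w2.length + 1 with hL
    have hLodd : Odd L := by
      rcases h1 with ⟨x, hx⟩; rcases h2 with ⟨y, hy⟩; exact ⟨x + y + 1, by omega⟩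
    obtain ⟨r1, hr1⟩ := pad_to hz1 w1 L (by omega) (by
      rcases h1 with ⟨x, hx⟩; rcases h2 with ⟨y, hy⟩; omega)
    obtain ⟨r2, hr2⟩ := pad_to hz2 w2 L (by omega) (by
      rcases h1 with ⟨x, hx⟩; rcases h2 with ⟨y, hy⟩; omega)
    obtain ⟨w, hw⟩ := mkWalk (G.directProd H) (fun t => (r1.getVert t, r2.getVert t)) L
      (fun t ht => ⟨r1.adj_getVert_succ (by omega), r2.adj_getVert_succ (by omega)⟩)
    have e1 : r1.getVert L = a := by rw [← hr1]; exact r1.getVert_length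
    have e2 : r2.getVert L = b := by rw [← hr2]; exact r2.getVert_length
    have he0 : (r1.getVert 0, r2.getVert 0) = (a, b) := by
      rw [r1.getVert_zero, r2.getVert_zero]
    have heL : (r1.getVert L, r2.getVert L) = (a, b) := by rw [e1, e2]
    exact not_colorable_two_of_odd_loop (w.copy he0 heL) (by rwa [Walk.length_copy, hw])
  · -- Part 2
    intro k α G hk hconn hnt hnc
    have i0 : Fin k := ⟨0, hk⟩
    -- odd loops and neighbors in each coordinate
    have hdata : ∀ i, ∃ (c : α i) (w : (G i).Walk c c), Odd w.length := fun i =>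
      exists_odd_loop (hnc i)
    choose c loop hloop using hdata
    -- reachability from equal-length coordinate walks
    have reach_of_walks : ∀ (n : ℕ) (x y : ∀ i, α i),
        (∀ i, ∃ w : (G i).Walk (x i) (y i), w.length = n) →
        (familyTensor G).Reachable x y := by
      intro n
      induction n with
      | zero =>
        intro x y h
        have hxy : x = y := funext fun i => by
          obtain ⟨w, hw⟩ := h i; exact Walk.eq_of_length_eq_zero hw
        exact hxy ▸ Reachable.refl x
      | succ n ih =>
        intro x y h
        choose w hw using h
        have hnn : ∀ i, ¬ (w i).Nil := fun i => by
          rw [Walk.not_nil_iff_lt_length, hw i]; omega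
        set z : ∀ i, α i := fun i => (w i).getVert 1 with hz
        have hadj : ∀ i, (G i).Adj (x i) (z i) := fun i => by
          have h0 : (0 : ℕ) < (w i).length := by rw [hw i]; omega
          simpa using (w i).adj_getVert_succ h0
        have hne : x ≠ z := by
          intro he
          exact (G i0).loopless.irrefl (z i0) (he ▸ hadj i0)
        have step : (familyTensor G).Adj x z := ⟨hne, hadj⟩
        refine step.reachable.trans (ih z y fun i => ⟨(w i).tail, ?_⟩)
        have h1 := Walk.length_tail_add_one (hnn i)
        have h2 := hw i
        omega
    constructor
    · -- connectedness
      haveI hnonempty : Nonempty (∀ i, α i) :=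
        Classical.nonempty_pi.mpr fun i => (hnt i).to_nonempty
      refine Connected.mk ?_
      intro x y
      -- even-length walk in each coordinate
      have hew : ∀ i, ∃ w : (G i).Walk (x i) (y i), Even w.length := fun i =>
        exists_even_walk (hconn i).preconnected (loop i) (hloop i) (x i) (y i)
      choose w hwe using hew
      set L := 2 * (Finset.univ.sum fun i => (w i).length) with hLdef
      have hle : ∀ i, (w i).length ≤ L := by
        intro i
        have h1 : (w i).length ≤ Finset.univ.sum fun j => (w j).length :=
          Finset.single_le_sum (fun j _ => Nat.zero_le ((w j).length))
            (Finset.mem_univ i)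
        omega
      have hwalks : ∀ i, ∃ w' : (G i).Walk (x i) (y i), w'.length = L := by
        intro i
        haveI := hnt i
        obtain ⟨zi, hzi⟩ := exists_adj (hconn i).preconnected (x i)
        refine pad_to hzi (w i) L (hle i) ?_
        rcases hwe i with ⟨m, hm⟩
        omega
      exact reach_of_walks L x y hwalks
    · -- non-bipartite
      obtain ⟨nz, hnz⟩ : ∃ f : ∀ i, α i → α i, ∀ i v, (G i).Adj v (f i v) := by
        have : ∀ i, ∀ v : α i, ∃ z, (G i).Adj v z := fun i => by
          haveI := hnt i
          exact exists_adj (hconn i).preconnected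
        choose f hf using this
        exact ⟨f, hf⟩
      set L := 2 * (Finset.univ.sum fun i => (loop i).length) + 1 with hLdef
      have hLodd : Odd L := ⟨Finset.univ.sum fun i => (loop i).length, by omega⟩
      have hloops : ∀ i, ∃ r : (G i).Walk (c i) (c i), r.length = L := by
        intro i
        have hle : (loop i).length ≤ L := by
          have h1 : (loop i).length ≤ Finset.univ.sum fun j => (loop j).length :=
            Finset.single_le_sum (fun j _ => Nat.zero_le ((loop j).length))
              (Finset.mem_univ i)
          omega
        refine pad_to (hnz i (c i)) (loop i) L hle ?_
        rcases hloop i with ⟨m, hm⟩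
        omega
      choose r hr using hloops
      have hstep : ∀ t, t < L →
          (familyTensor G).Adj (fun i => (r i).getVert t) (fun i => (r i).getVert (t + 1)) := by
        intro t ht
        have hadj : ∀ i, (G i).Adj ((r i).getVert t) ((r i).getVert (t + 1)) := by
          intro i
          have hlt : t < (r i).length := by rw [hr i]; omega
          exact (r i).adj_getVert_succ hlt
        refine ⟨fun he => ?_, hadj⟩
        have := congrFun he i0
        exact (G i0).ne_of_adj (hadj i0) this
      obtain ⟨w, hw⟩ := mkWalk (familyTensor G) (fun t i => (r i).getVert t) L hstep
      have he0 : (fun i => (r i).getVert 0) = c := funext fun i => (r i).getVert_zero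
      have heL : (fun i => (r i).getVert L) = c := funext fun i => by
        rw [← hr i]; exact (r i).getVert_length
      exact not_colorable_two_of_odd_loop (w.copy he0 heL)
        (by rwa [Walk.length_copy, hw])
end
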